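/- Let n ≥ 3 and define Vᵢ(x) = xᵢ/(1+|x|²)^(n/2) for i = 1,…,n and V₀(x) = (|x|²-1)/(1+|x|²)^(n/2). Then for all i,j ∈ {0,1,…,n} with i ≠ j, we have ∫_{ℝⁿ} ⟨∇Vᵢ(x), ∇Vⱼ(x)⟩ dx = 0. -/

import Mathlib

open MeasureTheory RealInnerProductSpace

section Aux

variable {F : Type*} [NormedAddCommGroup F] [InnerProductSpace ℝ F] [CompleteSpace F]

lemma inner_gradient_eq (f : F → ℝ) (x v : F) :
    ⟪gradient f x, v⟫ = fderiv ℝ f x v := by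
  rw [gradient, InnerProductSpace.toDual_symm_apply]

lemma gradient_neg' (f : F → ℝ) (x : F) :
    gradient (fun y => -f y) x = -gradient f x := by
  rw [gradient, gradient, fderiv_fun_neg, map_neg]

lemma gradient_comp_isometry (e : F ≃ₗᵢ[ℝ] F) (f : F → ℝ) (x : F) :
    gradient (f ∘ e) x = e.symm (gradient f (e x)) := by
  by_cases h : DifferentiableAt ℝ f (e x)
  · apply ext_inner_right ℝ
    intro v
    have h1 : ⟪e.symm (gradient f (e x)), v⟫ = ⟪gradient f (e x), e v⟫ := by
      rw [← e.symm.inner_map_map (gradient f (e x)) (e v), e.symm_apply_apply]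
    rw [inner_gradient_eq, h1, inner_gradient_eq]
    have hcomp : fderiv ℝ (f ∘ e) x = (fderiv ℝ f (e x)).comp (e : F →L[ℝ] F) := by
      rw [fderiv_comp x h e.differentiableAt, e.fderiv]
    rw [hcomp]
    rfl
  · have h2 : ¬ DifferentiableAt ℝ (f ∘ e) x := by
      intro hc
      have hc' : DifferentiableAt ℝ (f ∘ e) (e.symm (e x)) := by
        rw [e.symm_apply_apply]; exact hc
      have := hc'.comp (e x) e.symm.differentiableAt
      apply h
      have heq : f ∘ ⇑e ∘ ⇑e.symm = f := by
        funext y; simp [Function.comp]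
      rwa [Function.comp_assoc, heq] at this
    rw [gradient_eq_zero_of_not_differentiableAt h,
      gradient_eq_zero_of_not_differentiableAt h2, map_zero]

end Aux

section Key

variable {n : ℕ}

lemma key_vanish (e : EuclideanSpace ℝ (Fin n) ≃ₗᵢ[ℝ] EuclideanSpace ℝ (Fin n))
    (f g : EuclideanSpace ℝ (Fin n) → ℝ)
    (hf : f ∘ e = f) (hg : g ∘ e = fun x => -g x) :
    ∫ x, ⟪gradient f x, gradient g x⟫ = 0 := by
  have h1 : ∫ x, ⟪gradient f (e x), gradient g (e x)⟫ =
      ∫ x, ⟪gradient f x, gradient g x⟫ :=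
    MeasureTheory.integral_comp e (fun x => ⟪gradient f x, gradient g x⟫)
  have h2 : ∀ x, ⟪gradient f (e x), gradient g (e x)⟫ =
      -⟪gradient f x, gradient g x⟫ := by
    intro x
    have hf' := gradient_comp_isometry e f x
    have hg' := gradient_comp_isometry e g x
    rw [hf] at hf'
    rw [hg, gradient_neg'] at hg'
    calc ⟪gradient f (e x), gradient g (e x)⟫
        = ⟪e.symm (gradient f (e x)), e.symm (gradient g (e x))⟫ :=
          (e.symm.inner_map_map _ _).symm
      _ = ⟪gradient f x, -gradient g x⟫ := by rw [← hf', ← hg']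
      _ = -⟪gradient f x, gradient g x⟫ := by rw [inner_neg_right]
  have h3 : ∫ x, ⟪gradient f x, gradient g x⟫ =
      -∫ x, ⟪gradient f x, gradient g x⟫ := by
    conv_lhs => rw [← h1]
    simp_rw [h2]
    exact integral_neg _
  linarith

/-- The linear isometry negating the `k`-th coordinate. -/
noncomputable def negCoord (n : ℕ) (k : Fin n) :
    EuclideanSpace ℝ (Fin n) ≃ₗᵢ[ℝ] EuclideanSpace ℝ (Fin n) where
  toFun := fun x => (WithLp.toLp 2 (fun m => if m = k then -x m else x m) : EuclideanSpace ℝ (Fin n))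
  invFun := fun x => (WithLp.toLp 2 (fun m => if m = k then -x m else x m) : EuclideanSpace ℝ (Fin n))
  left_inv := by intro x; ext m; by_cases h : m = k <;> simp [h]
  right_inv := by intro x; ext m; by_cases h : m = k <;> simp [h]
  map_add' := by intro x y; ext m; by_cases h : m = k <;> simp [h] <;> ring
  map_smul' := by intro c x; ext m; by_cases h : m = k <;> simp [h]
  norm_map' := by
    intro x
    simp only [EuclideanSpace.norm_eq]
    congr 1
    apply Finset.sum_congr rfl
    intro m _
    by_cases h : m = k <;> simp [h]

lemma integral_inner_grad_comm (f g : EuclideanSpace ℝ (Fin n) → ℝ) :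
    ∫ x, ⟪gradient f x, gradient g x⟫ = ∫ x, ⟪gradient g x, gradient f x⟫ := by
  congr 1; funext x; exact real_inner_comm _ _

lemma negCoord_apply (k : Fin n) (x : EuclideanSpace ℝ (Fin n)) (m : Fin n) :
    negCoord n k x m = if m = k then -x m else x m := rfl

end Key

/-- The functions `V₀(x) = (|x|²-1)/(1+|x|²)^(n/2)` and `Vᵢ(x) = xᵢ/(1+|x|²)^(n/2)`,
`i = 1,…,n`, have pairwise orthogonal gradients in `L²(ℝⁿ)`. -/
theorem gradients_Vi_orthogonal (n : ℕ) (hn : 3 ≤ n)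
    (V : Fin (n + 1) → EuclideanSpace ℝ (Fin n) → ℝ)
    (hV : V = fun k => Fin.cases
      (fun x => (‖x‖ ^ 2 - 1) / (1 + ‖x‖ ^ 2) ^ ((n : ℝ) / 2))
      (fun i x => x i / (1 + ‖x‖ ^ 2) ^ ((n : ℝ) / 2)) k) :
    ∀ i j : Fin (n + 1), i ≠ j →
      ∫ x, ⟪gradient (V i) x, gradient (V j) x⟫ = 0 := by
  subst hV
  have heven0 : ∀ k : Fin n,
      (fun x : EuclideanSpace ℝ (Fin n) =>
        (‖x‖ ^ 2 - 1) / (1 + ‖x‖ ^ 2) ^ ((n : ℝ) / 2)) ∘ (negCoord n k) =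
      fun x => (‖x‖ ^ 2 - 1) / (1 + ‖x‖ ^ 2) ^ ((n : ℝ) / 2) := by
    intro k; funext x; simp [Function.comp, LinearIsometryEquiv.norm_map]
  have hevenc : ∀ k m : Fin n, m ≠ k →
      (fun x : EuclideanSpace ℝ (Fin n) =>
        x m / (1 + ‖x‖ ^ 2) ^ ((n : ℝ) / 2)) ∘ (negCoord n k) =
      fun x => x m / (1 + ‖x‖ ^ 2) ^ ((n : ℝ) / 2) := by
    intro k m hmk; funext x
    simp [Function.comp, negCoord_apply, hmk, LinearIsometryEquiv.norm_map]
  have hodd : ∀ k : Fin n,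
      (fun x : EuclideanSpace ℝ (Fin n) =>
        x k / (1 + ‖x‖ ^ 2) ^ ((n : ℝ) / 2)) ∘ (negCoord n k) =
      fun x => -(x k / (1 + ‖x‖ ^ 2) ^ ((n : ℝ) / 2)) := by
    intro k; funext x
    simp [Function.comp, negCoord_apply, LinearIsometryEquiv.norm_map, neg_div]
  intro i j hij
  rcases Fin.eq_zero_or_eq_succ i with rfl | ⟨i', rfl⟩
  · rcases Fin.eq_zero_or_eq_succ j with rfl | ⟨j', rfl⟩
    · exact absurd rfl hij
    · simpa using key_vanish (negCoord n j') _ _ (heven0 j') (hodd j')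
  · rcases Fin.eq_zero_or_eq_succ j with rfl | ⟨j', rfl⟩
    · rw [integral_inner_grad_comm]
      exact key_vanish (negCoord n i') _ _ (heven0 i') (hodd i')
    · have hij' : j' ≠ i' := fun h => hij (by rw [h])
      rw [integral_inner_grad_comm]
      exact key_vanish (negCoord n i') _ _ (hevenc i' j' hij') (hodd i')
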